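/- Let z be a standard Gaussian vector in ℝ^m. For any δ ∈ (0,1), with probability at least 1-δ, ‖z‖₂² ≤ m + 2√(m·log(1/δ)) + 2·log(1/δ). -/

import Mathlib

open MeasureTheory ProbabilityTheory

lemma lm_sqrt_exp (c : ℝ) : Real.sqrt (Real.exp c) = Real.exp (c / 2) := by
  rw [show Real.exp c = (Real.exp (c / 2)) ^ 2 by
    rw [sq, ← Real.exp_add]; ring_nf, Real.sqrt_sq (Real.exp_pos _).le]

lemma lm_gauss_int {s : ℝ} (hs : s < 1/2) :
    Integrable (fun x : ℝ => Real.exp (s * x ^ 2)) (gaussianReal 0 1) ∧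
    ∫ x, Real.exp (s * x ^ 2) ∂(gaussianReal 0 1) = (Real.sqrt (1 - 2 * s))⁻¹ := by
  have hb : 0 < 1/2 - s := by linarith
  have hpdf : ∀ x : ℝ, gaussianPDFReal 0 1 x * Real.exp (s * x ^ 2)
      = (Real.sqrt (2 * Real.pi))⁻¹ * Real.exp (-(1/2 - s) * x ^ 2) := by
    intro x
    simp only [gaussianPDFReal, NNReal.coe_one, mul_one, sub_zero]
    rw [mul_assoc, ← Real.exp_add]
    congr 1
    ring
  have hmeasd : Measurable fun x : ℝ => (gaussianPDFReal 0 1 x).toNNReal :=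
    (measurable_gaussianPDFReal 0 1).real_toNNReal
  have hden : gaussianReal 0 1
      = volume.withDensity (fun x => ((gaussianPDFReal 0 1 x).toNNReal : ENNReal)) := by
    rw [gaussianReal_of_var_ne_zero 0 one_ne_zero]
    rfl
  have hsmul : ∀ x : ℝ, (gaussianPDFReal 0 1 x).toNNReal • Real.exp (s * x ^ 2)
      = (Real.sqrt (2 * Real.pi))⁻¹ * Real.exp (-(1/2 - s) * x ^ 2) := by
    intro x
    rw [NNReal.smul_def, Real.coe_toNNReal _ (gaussianPDFReal_nonneg 0 1 x), smul_eq_mul, hpdf]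
  constructor
  · rw [hden, integrable_withDensity_iff_integrable_smul hmeasd]
    have : (fun x : ℝ => (gaussianPDFReal 0 1 x).toNNReal • Real.exp (s * x ^ 2))
        = fun x : ℝ => (Real.sqrt (2 * Real.pi))⁻¹ * Real.exp (-(1/2 - s) * x ^ 2) := by
      funext x; exact hsmul x
    rw [this]
    exact (integrable_exp_neg_mul_sq hb).const_mul _
  · rw [hden, integral_withDensity_eq_integral_smul hmeasd]
    simp_rw [hsmul]
    rw [integral_const_mul, integral_gaussian]
    rw [← Real.sqrt_inv, ← Real.sqrt_mul (by positivity), ← Real.sqrt_inv]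
    congr 1
    have hpi := Real.pi_pos
    have h1 : (1:ℝ) - 2 * s ≠ 0 := by linarith
    have h2 : (1:ℝ)/2 - s ≠ 0 := by linarith
    have h3 : Real.pi ≠ 0 := Real.pi_ne_zero
    field_simp

theorem laurent_massart_chi_squared {Ω : Type*} [MeasurableSpace Ω]
    (μ : Measure Ω) [IsProbabilityMeasure μ]
    (m : ℕ) (z : Fin m → Ω → ℝ)
    (hmeas : ∀ i, Measurable (z i))
    (hindep : iIndepFun z μ)
    (hgauss : ∀ i, Measure.map (z i) μ = gaussianReal 0 1)
    (δ : ℝ) (hδ : δ ∈ Set.Ioo (0 : ℝ) 1) :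
    ENNReal.ofReal (1 - δ) ≤
      μ {ω | ∑ i, (z i ω) ^ 2
          ≤ m + 2 * Real.sqrt (m * Real.log (1 / δ)) + 2 * Real.log (1 / δ)} := by
  obtain ⟨hδ0, hδ1⟩ := hδ
  set t := Real.log (1 / δ) with ht_def
  have ht : 0 < t := Real.log_pos (by rw [lt_div_iff₀ hδ0]; linarith)
  have hδeq : δ = Real.exp (-t) := by
    rw [ht_def, one_div, Real.log_inv, neg_neg, Real.exp_log hδ0]
  rcases Nat.eq_zero_or_pos m with hm | hm
  · subst hm
    have hset : {ω : Ω | ∑ i : Fin 0, (z i ω) ^ 2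
        ≤ (0 : ℕ) + 2 * Real.sqrt ((0 : ℕ) * t) + 2 * t} = Set.univ := by
      ext ω
      simp only [Set.mem_setOf_eq, Set.mem_univ, iff_true, Finset.univ_eq_empty,
        Finset.sum_empty, Nat.cast_zero]
      positivity
    rw [hset, measure_univ]
    exact ENNReal.ofReal_le_one.mpr (by linarith)
  have hm0 : (0:ℝ) < m := by exact_mod_cast hm
  set v := Real.sqrt (t / m) with hv_def
  have hv : 0 < v := Real.sqrt_pos.mpr (by positivity)
  have hv2 : v ^ 2 = t / m := Real.sq_sqrt (by positivity)
  have htv : t = m * v ^ 2 := by rw [hv2]; field_simp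
  have hsqmt : Real.sqrt (m * t) = m * v := by
    rw [show (m:ℝ) * t = ((m:ℝ) * v) ^ 2 by rw [htv]; ring,
      Real.sqrt_sq (by positivity)]
  set a : ℝ := m + 2 * Real.sqrt (m * t) + 2 * t with ha_def
  have ha : a = m * (1 + 2 * v + 2 * v ^ 2) := by rw [ha_def, hsqmt, htv]; ring
  have ha0 : 0 < a := by nlinarith
  have ham : (m:ℝ) < a := by nlinarith
  set s : ℝ := (1 - m / a) / 2 with hs_def
  have h2s : 1 - 2 * s = m / a := by rw [hs_def]; ring
  have hma : 0 < (m:ℝ) / a := by positivity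
  have hma1 : (m:ℝ) / a < 1 := (div_lt_one ha0).mpr ham
  have hs0 : 0 < s := by rw [hs_def]; linarith
  have hs2 : s < 1/2 := by rw [hs_def]; linarith
  -- the summand functions
  set X : Fin m → Ω → ℝ := fun i ω => z i ω ^ 2 with hX_def
  have hXmeas : ∀ i, Measurable (X i) := fun i => (hmeas i).pow_const 2
  have hXindep : iIndepFun X μ :=
    hindep.comp (fun _ x => x ^ 2) (fun _ => measurable_id.pow_const 2)
  have hFmeas : AEStronglyMeasurable (fun x : ℝ => Real.exp (s * x ^ 2))
      (gaussianReal 0 1) :=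
    (Real.measurable_exp.comp ((measurable_id.pow_const 2).const_mul s)).aestronglyMeasurable
  have hInt_i : ∀ i, Integrable (fun ω => Real.exp (s * X i ω)) μ := by
    intro i
    have heq : (fun ω => Real.exp (s * X i ω))
        = (fun x : ℝ => Real.exp (s * x ^ 2)) ∘ z i := rfl
    rw [heq, ← integrable_map_measure (by rw [hgauss i]; exact hFmeas) (hmeas i).aemeasurable,
      hgauss i]
    exact (lm_gauss_int hs2).1
  have hmgf_i : ∀ i, mgf (X i) μ s = (Real.sqrt (1 - 2 * s))⁻¹ := by
    intro i
    have heq : ∫ ω, Real.exp (s * X i ω) ∂μ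
        = ∫ x, Real.exp (s * x ^ 2) ∂(Measure.map (z i) μ) := by
      rw [integral_map (hmeas i).aemeasurable (by rw [hgauss i]; exact hFmeas)]
    rw [mgf, heq, hgauss i, (lm_gauss_int hs2).2]
  set S : Ω → ℝ := ∑ i, X i with hS_def
  have hSmeas : Measurable S := by
    have hfe : S = fun ω => ∑ i, X i ω := by
      funext ω; simp [hS_def]
    rw [hfe]; exact Finset.measurable_sum _ (fun i _ => hXmeas i)
  have hmgfS : mgf S μ s = ((Real.sqrt (1 - 2 * s))⁻¹) ^ m := by
    rw [hS_def, hXindep.mgf_sum hXmeas]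
    simp [hmgf_i]
  have hIntS : Integrable (fun ω => Real.exp (s * S ω)) μ :=
    hXindep.integrable_exp_mul_sum hXmeas (fun i _ => hInt_i i)
  have chern := measure_ge_le_exp_mul_mgf (X := S) (μ := μ) (t := s) a hs0.le hIntS
  -- the key numeric inequality
  have hkey : Real.exp (-s * a) * ((Real.sqrt (1 - 2 * s))⁻¹) ^ m ≤ δ := by
    have h1 : (Real.sqrt (1 - 2 * s))⁻¹ = Real.exp (Real.log (a / m) / 2) := by
      rw [h2s, show (m:ℝ) / a = Real.exp (Real.log ((m:ℝ) / a)) from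
        (Real.exp_log hma).symm, lm_sqrt_exp, ← Real.exp_neg]
      congr 1
      rw [Real.log_div (ne_of_gt hm0) (ne_of_gt ha0),
        Real.log_div (ne_of_gt ha0) (ne_of_gt hm0)]
      ring
    rw [h1, ← Real.exp_nat_mul, ← Real.exp_add]
    have hlog : Real.log (a / m) ≤ 2 * v := by
      rw [Real.log_le_iff_le_exp (by positivity)]
      have hq := Real.quadratic_le_exp_of_nonneg (show (0:ℝ) ≤ 2 * v by positivity)
      rw [ha, div_le_iff₀ hm0] at *
      nlinarith
    rw [hδeq, Real.exp_le_exp]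
    have hsa : s * a = (a - m) / 2 := by
      rw [hs_def]; field_simp
    have hmul := mul_le_mul_of_nonneg_left hlog (show (0:ℝ) ≤ (m:ℝ) / 2 by positivity)
    nlinarith
  have htail : μ {ω | a ≤ S ω} ≤ ENNReal.ofReal δ := by
    rw [ENNReal.le_ofReal_iff_toReal_le (measure_ne_top _ _) hδ0.le]
    calc (μ {ω | a ≤ S ω}).toReal ≤ Real.exp (-s * a) * mgf S μ s := chern
      _ ≤ δ := by rw [hmgfS]; exact hkey
  have hμc : μ {ω | S ω ≤ a} = 1 - μ {ω | a < S ω} := by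
    have hset : {ω | S ω ≤ a} = {ω | a < S ω}ᶜ := by
      ext ω; simp [not_lt]
    rw [hset, prob_compl_eq_one_sub (measurableSet_lt measurable_const hSmeas)]
  have hgoal : {ω | ∑ i, (z i ω) ^ 2 ≤ a} = {ω | S ω ≤ a} := by
    ext ω
    simp only [Set.mem_setOf_eq, hS_def, Finset.sum_apply, hX_def]
  rw [hgoal]
  calc ENNReal.ofReal (1 - δ) = 1 - ENNReal.ofReal δ := by
        rw [ENNReal.ofReal_sub _ hδ0.le, ENNReal.ofReal_one]
    _ ≤ 1 - μ {ω | a < S ω} :=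
        tsub_le_tsub_left
          ((measure_mono (fun ω (h : a < S ω) => le_of_lt h)).trans htail) 1
    _ = μ {ω | S ω ≤ a} := hμc.symm
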